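/- Let K be a field of characteristic zero, V an (n+1)-dimensional vector space with basis e_0,...,e_n, 𝔤 = 𝔰𝔩(V), L = K·e_0, and L^d = K·e_0^d ⊆ Sym^d(V). For 1 ≤ l < d, the subspace U_l(𝔤)·L^d of Sym^d(V) spanned by {x_1⋯x_k·(e_0^d) : 0 ≤ k ≤ l, x_j ∈ 𝔤} equals the subspace e_0^{d−l}·Sym^l(V) = span{e_0^{d−l} v_1 ⋯ v_l : v_j ∈ V}; in particular dim_K U_l(𝔤)·L^d = C(n+l, n). -/

import Mathlib

open MvPolynomial

section Stmt19Aux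

variable {K : Type*} [Field K] {n : ℕ}

lemma s19_degree_sub_single {N : ℕ} {s : Fin N →₀ ℕ} {i : Fin N} (hi : s i ≠ 0) :
    (s - Finsupp.single i 1) + Finsupp.single i 1 = s :=
  tsub_add_cancel_of_le (by rw [Finsupp.single_le_iff]; omega)

lemma s19_degree_univ {N : ℕ} (f : Fin N →₀ ℕ) : f.degree = ∑ i, f i :=
  Finset.sum_subset (Finset.subset_univ _) (fun _ _ hi => Finsupp.notMem_support_iff.1 hi)

lemma s19_degree_add {N : ℕ} (f g : Fin N →₀ ℕ) : (f + g).degree = f.degree + g.degree := by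
  simp [s19_degree_univ, Finset.sum_add_distrib]

lemma s19_degree_single {N : ℕ} (i : Fin N) (m : ℕ) : (Finsupp.single i m).degree = m := by
  simp [s19_degree_univ]

lemma s19_hom_mkDer {k : ℕ} (f : Fin (n + 1) → MvPolynomial (Fin (n + 1)) K)
    (hf : ∀ i, (f i).IsHomogeneous 1) {p : MvPolynomial (Fin (n + 1)) K}
    (hp : p.IsHomogeneous k) : (mkDerivation K f p).IsHomogeneous k := by
  rw [← p.support_sum_monomial_coeff, map_sum]
  apply IsHomogeneous.sum
  intro s hs
  rw [mkDerivation_monomial, smul_eq_C_mul]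
  apply IsHomogeneous.C_mul ?_ _
  apply IsHomogeneous.sum
  intro i hi
  have hsi : s i ≠ 0 := Finsupp.mem_support_iff.1 hi
  have hdeg : s.degree = k := by
    have := hp (Finsupp.mem_support_iff.1 hs)
    rw [Finsupp.degree_eq_weight_one]; exact this
  have h2 : (s - Finsupp.single i 1).degree + 1 = k := by
    have := congrArg Finsupp.degree (s19_degree_sub_single hsi)
    rw [s19_degree_add, s19_degree_single] at this
    omega
  simp only [smul_eq_mul]
  have := (isHomogeneous_monomial ((s i : K))
    (rfl : (s - Finsupp.single i 1).degree = _)).mul (hf i)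
  rwa [h2] at this

lemma s19_D_std (i : Fin (n + 1)) (s : Fin (n + 1) →₀ ℕ) (r : K) :
    mkDerivation K (fun v => ∑ j, C (Matrix.single i 0 (1 : K) j v) * X j)
        (monomial s r)
      = (s 0 : K) • monomial (s - Finsupp.single 0 1 + Finsupp.single i 1) r := by
  have hf : ∀ v : Fin (n + 1),
      (∑ j, C (Matrix.single i 0 (1 : K) j v) * X j : MvPolynomial (Fin (n + 1)) K)
        = if v = 0 then X i else 0 := by
    intro v
    by_cases hv : v = 0
    · subst hv
      simp only [Matrix.single, Matrix.of_apply, and_true, eq_self_iff_true]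
      rw [Finset.sum_eq_single i]
      · simp
      · intro b _ hb; simp [Ne.symm hb]
      · simp
    · rw [if_neg hv]
      apply Finset.sum_eq_zero
      intro j _
      simp [Matrix.single, Ne.symm hv, hv]
  rw [mkDerivation_monomial]
  simp only [hf]
  rw [Finsupp.sum]
  rw [Finset.sum_eq_single (0 : Fin (n + 1))]
  · rw [if_pos rfl, smul_eq_mul, X, monomial_mul, smul_monomial, smul_monomial]
    rw [smul_eq_mul, smul_eq_mul, mul_comm]
    ring_nf
  · intro b _ hb
    simp [if_neg hb]
  · intro h
    have : s 0 = 0 := Finsupp.notMem_support_iff.1 h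
    simp [this]

lemma s19_fold [CharZero K] (d : ℕ)
    (D : Matrix (Fin (n + 1)) (Fin (n + 1)) K →
      Derivation K (MvPolynomial (Fin (n + 1)) K) (MvPolynomial (Fin (n + 1)) K))
    (hD : ∀ x, D x = mkDerivation K (fun i => ∑ j, C (x j i) * X j)) :
    ∀ m : ℕ, ∀ τ : Fin (n + 1) →₀ ℕ, τ.degree = d → τ 0 + m = d →
    ∃ (xs : List (Matrix (Fin (n + 1)) (Fin (n + 1)) K)) (c : K),
      xs.length = m ∧ (∀ x ∈ xs, x.trace = 0) ∧ c ≠ 0 ∧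
      xs.foldr (fun x q => D x q) ((X 0 : MvPolynomial (Fin (n + 1)) K) ^ d)
        = c • monomial τ 1 := by
  intro m
  induction m with
  | zero =>
    intro τ hdeg h0
    have hτ : τ = Finsupp.single 0 d := by
      have hsum : τ 0 + ∑ i : Fin n, τ i.succ = d := by
        rw [← hdeg, s19_degree_univ, Fin.sum_univ_succ]
      have hz : ∀ i : Fin n, τ i.succ = 0 := by
        have : ∑ i : Fin n, τ i.succ = 0 := by omega
        intro i
        exact Finset.sum_eq_zero_iff.1 this i (Finset.mem_univ i)
      ext j
      refine Fin.cases ?_ ?_ j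
      · simp only [Finsupp.single_eq_same]; omega
      · intro i
        simp [hz i, Finsupp.single_eq_of_ne (Ne.symm (Fin.succ_ne_zero i))]
    refine ⟨[], 1, rfl, by simp, one_ne_zero, ?_⟩
    simp [hτ, X_pow_eq_monomial]
  | succ m ih =>
    intro τ hdeg h0
    have hsum : τ 0 + ∑ i : Fin n, τ i.succ = d := by
      rw [← hdeg, s19_degree_univ, Fin.sum_univ_succ]
    have hex : ∃ i : Fin n, τ i.succ ≠ 0 := by
      by_contra hc
      push_neg at hc
      have : ∑ i : Fin n, τ i.succ = 0 := Finset.sum_eq_zero fun i _ => hc i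
      omega
    obtain ⟨i0, hi0⟩ := hex
    set i := i0.succ with hidef
    have hi : i ≠ 0 := Fin.succ_ne_zero i0
    set τ' := τ - Finsupp.single i 1 + Finsupp.single 0 1 with hτ'def
    have hsub : (τ - Finsupp.single i 1) + Finsupp.single i 1 = τ := s19_degree_sub_single hi0
    have hdeg' : τ'.degree = d := by
      have h1 : (τ - Finsupp.single i 1).degree + 1 = d := by
        have := congrArg Finsupp.degree hsub
        rw [s19_degree_add, s19_degree_single] at this
        omega
      rw [hτ'def, s19_degree_add, s19_degree_single]
      omega
    have hτ'0 : τ' 0 = τ 0 + 1 := by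
      rw [hτ'def]
      simp [Finsupp.single_eq_of_ne' hi]
    obtain ⟨xs, c, hlen, htr, hc, hfold⟩ := ih τ' hdeg' (by omega)
    refine ⟨Matrix.single i 0 1 :: xs, c * (τ' 0 : K), by simp [hlen], ?_, ?_, ?_⟩
    · intro x hx
      rcases List.mem_cons.1 hx with h | h
      · subst h
        exact Matrix.trace_single_eq_of_ne (c := (1 : K)) (h := hi)
      · exact htr x h
    · refine mul_ne_zero hc ?_
      rw [hτ'0]
      exact Nat.cast_ne_zero.2 (Nat.succ_ne_zero _)
    · rw [List.foldr_cons, hfold, hD, Derivation.map_smul, s19_D_std]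
      have harg : τ' - Finsupp.single 0 1 + Finsupp.single i 1 = τ := by
        rw [hτ'def, add_tsub_cancel_right, hsub]
      rw [harg, smul_smul]

lemma s19_step (d k : ℕ)
    (D : Matrix (Fin (n + 1)) (Fin (n + 1)) K →
      Derivation K (MvPolynomial (Fin (n + 1)) K) (MvPolynomial (Fin (n + 1)) K))
    (hD : ∀ x, D x = mkDerivation K (fun i => ∑ j, C (x j i) * X j))
    (x : Matrix (Fin (n + 1)) (Fin (n + 1)) K) (p : MvPolynomial (Fin (n + 1)) K)
    (hp : p ∈ Submodule.map
      (LinearMap.mulLeft K ((X 0 : MvPolynomial (Fin (n + 1)) K) ^ (d - k)))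
      (homogeneousSubmodule (Fin (n + 1)) K k))
    (hk : k + 1 ≤ d) :
    D x p ∈ Submodule.map
      (LinearMap.mulLeft K ((X 0 : MvPolynomial (Fin (n + 1)) K) ^ (d - (k + 1))))
      (homogeneousSubmodule (Fin (n + 1)) K (k + 1)) := by
  obtain ⟨q, hq, rfl⟩ := hp
  rw [LinearMap.mulLeft_apply]
  set a := d - (k + 1) with ha
  have hdk : d - k = a + 1 := by omega
  set w : MvPolynomial (Fin (n + 1)) K := ∑ j, C (x j 0) * X j with hw
  have hwh : w.IsHomogeneous 1 := by
    apply IsHomogeneous.sum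
    intro j _
    exact isHomogeneous_C_mul_X _ _
  have hDX : D x (X 0) = w := by rw [hD, mkDerivation_X]
  have hq' : (D x q).IsHomogeneous k := by
    rw [hD]
    exact s19_hom_mkDer _ (fun i => by
      apply IsHomogeneous.sum; intro j _; exact isHomogeneous_C_mul_X _ _) hq
  set r : MvPolynomial (Fin (n + 1)) K := X 0 * D x q + (a + 1) • (w * q) with hr
  have hrh : r ∈ homogeneousSubmodule (Fin (n + 1)) K (k + 1) := by
    apply add_mem
    · have := (isHomogeneous_X K (0 : Fin (n + 1))).mul hq'
      rwa [Nat.add_comm 1 k] at this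
    · refine nsmul_mem ?_ (a + 1)
      have := hwh.mul hq
      rwa [Nat.add_comm 1 k] at this
  refine ⟨r, hrh, ?_⟩
  rw [LinearMap.mulLeft_apply, hr]
  rw [hdk, Derivation.leibniz, Derivation.leibniz_pow, hDX]
  simp only [smul_eq_mul, nsmul_eq_mul, Nat.add_sub_cancel, Nat.cast_add, Nat.cast_one]
  ring

end Stmt19Aux

set_option maxHeartbeats 1000000 in
set_option synthInstance.maxHeartbeats 400000 in
/-- With `Sym(V)` for `V = K^{n+1}` (basis `e_0,...,e_n`) realized as
`K[X_0,...,X_n]`, `L^d = K·e_0^d = K·X_0^d`, and `𝔤 = 𝔰𝔩(V)` acting by derivations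
(`D x (X_i) = ∑_j x_{ji} X_j` for traceless `x`), for `1 ≤ l < d` the subspace
`U_l(𝔤)·L^d` — the span of all `x_1⋯x_k·(e_0^d)` with `k ≤ l`, `x_j ∈ 𝔤` — equals
`e_0^{d−l}·Sym^l(V)`, the span of `X_0^{d−l}·q` for `q` homogeneous of degree `l`;
in particular its dimension is `C(n+l, n)`. -/
theorem stmt_19 (K : Type*) [Field K] [CharZero K] (n d l : ℕ)
    (hn : 1 ≤ n) (hl : 1 ≤ l) (hld : l < d)
    (D : Matrix (Fin (n + 1)) (Fin (n + 1)) K →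
      Derivation K (MvPolynomial (Fin (n + 1)) K) (MvPolynomial (Fin (n + 1)) K))
    (hD : ∀ x, D x = mkDerivation K (fun i => ∑ j, C (x j i) * X j))
    (S : Set (MvPolynomial (Fin (n + 1)) K))
    (hS : S = {p | ∃ xs : List (Matrix (Fin (n + 1)) (Fin (n + 1)) K),
        xs.length ≤ l ∧ (∀ x ∈ xs, x.trace = 0) ∧
        p = xs.foldr (fun x q => D x q) ((X 0 : MvPolynomial (Fin (n + 1)) K) ^ d)}) :
    Submodule.span K S =
      Submodule.span K {p | ∃ q ∈ homogeneousSubmodule (Fin (n + 1)) K l,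
        p = (X 0 : MvPolynomial (Fin (n + 1)) K) ^ (d - l) * q} ∧
    Module.finrank K ↥(Submodule.span K S) = Nat.choose (n + l) n := by
  classical
  set f : MvPolynomial (Fin (n + 1)) K →ₗ[K] MvPolynomial (Fin (n + 1)) K :=
    LinearMap.mulLeft K ((X 0 : MvPolynomial (Fin (n + 1)) K) ^ (d - l)) with hfdef
  set H := homogeneousSubmodule (Fin (n + 1)) K l with hHdef
  -- the target set is the image of H under f
  have hTset : {p | ∃ q ∈ homogeneousSubmodule (Fin (n + 1)) K l,
      p = (X 0 : MvPolynomial (Fin (n + 1)) K) ^ (d - l) * q} = f '' H := by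
    ext p
    simp only [Set.mem_setOf_eq, Set.mem_image, SetLike.mem_coe, hfdef,
      LinearMap.mulLeft_apply]
    constructor
    · rintro ⟨q, hq, rfl⟩; exact ⟨q, hq, rfl⟩
    · rintro ⟨q, hq, rfl⟩; exact ⟨q, hq, rfl⟩
  have hspanT : Submodule.span K {p | ∃ q ∈ homogeneousSubmodule (Fin (n + 1)) K l,
      p = (X 0 : MvPolynomial (Fin (n + 1)) K) ^ (d - l) * q} = Submodule.map f H := by
    rw [hTset, ← Submodule.span_eq H, Submodule.span_image, Submodule.span_eq]
  -- forward : every fold lands in X0^(d-k) * H_k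
  have hfwd : ∀ xs : List (Matrix (Fin (n + 1)) (Fin (n + 1)) K), xs.length ≤ l →
      xs.foldr (fun x q => D x q) ((X 0 : MvPolynomial (Fin (n + 1)) K) ^ d) ∈
        Submodule.map
          (LinearMap.mulLeft K ((X 0 : MvPolynomial (Fin (n + 1)) K) ^ (d - xs.length)))
          (homogeneousSubmodule (Fin (n + 1)) K xs.length) := by
    intro xs
    induction xs with
    | nil =>
      intro _
      refine ⟨1, ?_, ?_⟩
      · exact isHomogeneous_one _ _
      · simp [LinearMap.mulLeft_apply]
    | cons x xs ih =>
      intro hlen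
      have h1 : xs.length ≤ l := by
        simp only [List.length_cons] at hlen; omega
      have := s19_step d xs.length D hD x _ (ih h1)
        (by simp only [List.length_cons] at hlen; omega)
      simpa using this
  -- each X0^(d-k) * H_k is inside map f H for k ≤ l
  have hsub : ∀ k : ℕ, k ≤ l →
      Submodule.map
          (LinearMap.mulLeft K ((X 0 : MvPolynomial (Fin (n + 1)) K) ^ (d - k)))
          (homogeneousSubmodule (Fin (n + 1)) K k) ≤ Submodule.map f H := by
    intro k hk p hp
    obtain ⟨q, hq, rfl⟩ := hp
    have hdk : d - k = (d - l) + (l - k) := by omega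
    have hmem : (X 0 : MvPolynomial (Fin (n + 1)) K) ^ (l - k) * q ∈ H := by
      have := (isHomogeneous_X_pow (R := K) (0 : Fin (n + 1)) (l - k)).mul
        (hq : MvPolynomial.IsHomogeneous q k)
      have heq : (l - k) + k = l := by omega
      rw [heq] at this
      exact this
    refine ⟨(X 0 : MvPolynomial (Fin (n + 1)) K) ^ (l - k) * q, hmem, ?_⟩
    simp only [hfdef, LinearMap.mulLeft_apply]
    rw [hdk, pow_add, mul_assoc]
  -- span S ≤ map f H
  have hle₁ : Submodule.span K S ≤ Submodule.map f H := by
    rw [Submodule.span_le]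
    intro p hp
    rw [hS] at hp
    obtain ⟨xs, hlen, htr, rfl⟩ := hp
    exact hsub xs.length hlen (hfwd xs hlen)
  -- map f H ≤ span S
  have hle₂ : Submodule.map f H ≤ Submodule.span K S := by
    rintro p ⟨q, hq, rfl⟩
    simp only [hfdef, LinearMap.mulLeft_apply]
    rw [← q.support_sum_monomial_coeff, Finset.mul_sum]
    apply Submodule.sum_mem
    intro s hs
    have hsdeg : s.degree = l := by
      have := hq (MvPolynomial.mem_support_iff.1 hs)
      rw [Finsupp.degree_eq_weight_one]; exact this
    set τ := Finsupp.single (0 : Fin (n + 1)) (d - l) + s with hτdef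
    have hmono : (X 0 : MvPolynomial (Fin (n + 1)) K) ^ (d - l) * monomial s (coeff s q)
        = (coeff s q) • monomial τ 1 := by
      rw [X_pow_eq_monomial, monomial_mul, smul_monomial, hτdef]
      simp
    rw [hmono]
    apply Submodule.smul_mem
    have hs0 : s 0 ≤ l := hsdeg ▸ Finsupp.le_degree 0 s
    have hτdeg : τ.degree = d := by
      rw [hτdef, s19_degree_add, s19_degree_single, hsdeg]
      omega
    have hτ0 : τ 0 + (l - s 0) = d := by
      rw [hτdef]
      simp only [Finsupp.add_apply, Finsupp.single_eq_same]
      omega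
    obtain ⟨xs, c, hlen, htr, hc, hfold⟩ := s19_fold d D hD (l - s 0) τ hτdeg hτ0
    have hτmem : monomial τ (1 : K)
        = c⁻¹ • (xs.foldr (fun x q => D x q) ((X 0 : MvPolynomial (Fin (n + 1)) K) ^ d)) := by
      rw [hfold, smul_smul, inv_mul_cancel₀ hc, one_smul]
    rw [hτmem]
    apply Submodule.smul_mem
    apply Submodule.subset_span
    rw [hS]
    exact ⟨xs, by omega, htr, rfl⟩
  have hmain : Submodule.span K S = Submodule.map f H := le_antisymm hle₁ hle₂
  refine ⟨hmain.trans hspanT.symm, ?_⟩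
  rw [hmain]
  -- injectivity of multiplication by X0^(d-l)
  have hinj : Function.Injective f := by
    intro a b hab
    simp only [hfdef, LinearMap.mulLeft_apply] at hab
    exact mul_left_cancel₀ (pow_ne_zero _ (MvPolynomial.X_ne_zero 0)) hab
  rw [← (Submodule.equivMapOfInjective f hinj H).finrank_eq]
  -- dimension of H
  have hcardmul : ∀ τ : Fin (n + 1) →₀ ℕ, (Finsupp.toMultiset τ).card = τ.degree := by
    intro τ
    rw [Finsupp.card_toMultiset]
    rfl
  let e2 : ↥{d : Fin (n + 1) →₀ ℕ | Finsupp.degree d = l} ≃ Sym (Fin (n + 1)) l :=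
    Equiv.subtypeEquiv Finsupp.orderIsoMultiset.toEquiv (fun τ => by
      rw [Set.mem_setOf_eq]
      change Finsupp.degree τ = l ↔ (Finsupp.toMultiset τ).card = l
      rw [hcardmul τ])
  haveI : Fintype ↥{d : Fin (n + 1) →₀ ℕ | Finsupp.degree d = l} :=
    Fintype.ofEquiv _ e2.symm
  have hHfr : Module.finrank K ↥H = Nat.choose (n + l) n := by
    rw [hHdef, homogeneousSubmodule_eq_finsupp_supported]
    rw [(AddMonoidAlgebra.supportedEquivFinsupp (s := _)).finrank_eq, Module.finrank_finsupp_self]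
    rw [Fintype.card_congr e2, Sym.card_sym_eq_multichoose, Nat.multichoose_eq,
      Fintype.card_fin]
    have h1 : n + 1 + l - 1 = n + l := by omega
    rw [h1]
    simpa [Nat.add_sub_cancel_left] using Nat.choose_symm (Nat.le_add_right n l)
  exact hHfr
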